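/- arXiv:1911.03360 — 3 statements merged into one kernel-verified Lean document; each statement's English description precedes it below -/
import Mathlib

section
/- Let G = (V,E) be an undirected connected graph with positive edge weights, S ⊆ V a nonempty group, and v ∈ V \ S. Let B_S be the shortest-path DAG rooted at S (edges (x,y) with dist(S,y) = dist(S,x) + w(x,y)), and let D_v be the set of vertices reachable from v in B_S. Then f(S) − f(S ∪ {v}) ≥ |D_v| · dist(S,v), where f(T) = Σ_{x ∈ V\T} dist(T,x) is the farness of T. -/
open SimpleGraph Finset

/-- Total weight of a walk. -/
noncomputable def walkWeight {V : Type*} {G : SimpleGraph V} (w : V → V → ℝ) :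
    {x y : V} → G.Walk x y → ℝ
  | _, _, SimpleGraph.Walk.nil => 0
  | _, _, @SimpleGraph.Walk.cons _ _ a b _ _ p => w a b + walkWeight w p

/-- Weighted shortest-path distance between two vertices. -/
noncomputable def wdist {V : Type*} (G : SimpleGraph V) (w : V → V → ℝ) (x y : V) : ℝ :=
  sInf {r | ∃ p : G.Walk x y, walkWeight w p = r}

/-- Weighted distance from a group `S` to a vertex `x`. -/
noncomputable def wsetDist {V : Type*} (G : SimpleGraph V) (w : V → V → ℝ)
    (S : Finset V) (x : V) : ℝ :=
  sInf {r | ∃ s ∈ S, wdist G w s x = r}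

/-- Weighted farness of a group `S`. -/
noncomputable def wFarness {V : Type*} [Fintype V] [DecidableEq V]
    (G : SimpleGraph V) (w : V → V → ℝ) (S : Finset V) : ℝ :=
  ∑ x ∈ Sᶜ, wsetDist G w S x

/-- Edge relation of the weighted shortest-path DAG rooted at `S`. -/
def wdagEdge {V : Type*} (G : SimpleGraph V) (w : V → V → ℝ) (S : Finset V) (x y : V) : Prop :=
  G.Adj x y ∧ wsetDist G w S y = wsetDist G w S x + w x y

/-- Vertices reachable from `v` in the weighted shortest-path DAG rooted at `S`. -/
def wreach {V : Type*} (G : SimpleGraph V) (w : V → V → ℝ) (S : Finset V) (v : V) : Set V :=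
  {x | Relation.ReflTransGen (wdagEdge G w S) v x}

section Aux

variable {V : Type*} {G : SimpleGraph V} {w : V → V → ℝ}

lemma walkWeight_nonneg (hpos : ∀ x y, G.Adj x y → 0 < w x y) :
    ∀ {x y : V} (p : G.Walk x y), 0 ≤ walkWeight w p
  | _, _, SimpleGraph.Walk.nil => by simp [walkWeight]
  | _, _, SimpleGraph.Walk.cons h p => by
      have := walkWeight_nonneg hpos p
      have := (hpos _ _ h).le
      simp only [walkWeight]
      linarith

lemma walkWeight_append :
    ∀ {x y z : V} (p : G.Walk x y) (q : G.Walk y z),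
      walkWeight w (p.append q) = walkWeight w p + walkWeight w q
  | _, _, _, SimpleGraph.Walk.nil, q => by simp [walkWeight]
  | _, _, _, SimpleGraph.Walk.cons h p, q => by
      simp only [SimpleGraph.Walk.cons_append, walkWeight,
        walkWeight_append p q, add_assoc]

lemma wdist_set_nonempty (hconn : G.Connected) (x y : V) :
    {r | ∃ p : G.Walk x y, walkWeight w p = r}.Nonempty := by
  obtain ⟨p⟩ := hconn.preconnected x y
  exact ⟨_, p, rfl⟩

lemma wdist_set_bdd (hpos : ∀ x y, G.Adj x y → 0 < w x y) (x y : V) :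
    BddBelow {r | ∃ p : G.Walk x y, walkWeight w p = r} := by
  refine ⟨0, ?_⟩
  rintro r ⟨p, rfl⟩
  exact walkWeight_nonneg hpos p

lemma wdist_nonneg (hpos : ∀ x y, G.Adj x y → 0 < w x y) (x y : V) :
    0 ≤ wdist G w x y := by
  apply Real.sInf_nonneg
  rintro r ⟨p, rfl⟩
  exact walkWeight_nonneg hpos p

lemma wdist_le_weight (hpos : ∀ x y, G.Adj x y → 0 < w x y) {x y : V} (p : G.Walk x y) :
    wdist G w x y ≤ walkWeight w p :=
  csInf_le (wdist_set_bdd hpos x y) ⟨p, rfl⟩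

lemma wdist_self (hpos : ∀ x y, G.Adj x y → 0 < w x y) (x : V) :
    wdist G w x x = 0 := by
  have h1 := wdist_le_weight (G := G) hpos (SimpleGraph.Walk.nil (u := x))
  have h2 := wdist_nonneg (G := G) hpos x x
  simp only [walkWeight] at h1
  linarith

lemma wdist_le_w (hpos : ∀ x y, G.Adj x y → 0 < w x y) {x y : V} (h : G.Adj x y) :
    wdist G w x y ≤ w x y := by
  have := wdist_le_weight hpos (SimpleGraph.Walk.cons h SimpleGraph.Walk.nil)
  simp only [walkWeight] at this
  linarith

lemma wdist_triangle (hconn : G.Connected) (hpos : ∀ x y, G.Adj x y → 0 < w x y)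
    (x y z : V) : wdist G w x z ≤ wdist G w x y + wdist G w y z := by
  have key : ∀ (p : G.Walk x y) (q : G.Walk y z),
      wdist G w x z ≤ walkWeight w p + walkWeight w q := by
    intro p q
    have := wdist_le_weight (G := G) hpos (p.append q)
    rwa [walkWeight_append] at this
  have h1 : ∀ r ∈ {r | ∃ q : G.Walk y z, walkWeight w q = r},
      wdist G w x z - wdist G w x y ≤ r := by
    rintro r ⟨q, rfl⟩
    have h2 : ∀ a ∈ {a | ∃ p : G.Walk x y, walkWeight w p = a},
        wdist G w x z - walkWeight w q ≤ a := by
      rintro a ⟨p, rfl⟩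
      have := key p q; linarith
    have := le_csInf (wdist_set_nonempty hconn x y) h2
    rw [show sInf {a | ∃ p : G.Walk x y, walkWeight w p = a} = wdist G w x y from rfl] at this
    linarith
  have := le_csInf (wdist_set_nonempty hconn y z) h1
  rw [show sInf {r | ∃ q : G.Walk y z, walkWeight w q = r} = wdist G w y z from rfl] at this
  linarith

lemma wsetDist_set_nonempty {S : Finset V} (hS : S.Nonempty) (x : V) :
    {r | ∃ s ∈ S, wdist G w s x = r}.Nonempty := by
  obtain ⟨s, hs⟩ := hS
  exact ⟨_, s, hs, rfl⟩

lemma wsetDist_set_bdd (hpos : ∀ x y, G.Adj x y → 0 < w x y) (S : Finset V) (x : V) :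
    BddBelow {r | ∃ s ∈ S, wdist G w s x = r} := by
  refine ⟨0, ?_⟩
  rintro r ⟨s, hs, rfl⟩
  exact wdist_nonneg hpos s x

lemma wsetDist_nonneg (hpos : ∀ x y, G.Adj x y → 0 < w x y) (S : Finset V) (x : V) :
    0 ≤ wsetDist G w S x := by
  apply Real.sInf_nonneg
  rintro r ⟨s, hs, rfl⟩
  exact wdist_nonneg hpos s x

lemma wsetDist_le (hpos : ∀ x y, G.Adj x y → 0 < w x y) {S : Finset V} {s : V}
    (hs : s ∈ S) (x : V) : wsetDist G w S x ≤ wdist G w s x :=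
  csInf_le (wsetDist_set_bdd hpos S x) ⟨s, hs, rfl⟩

lemma wsetDist_mem_zero (hpos : ∀ x y, G.Adj x y → 0 < w x y) {S : Finset V} {s : V}
    (hs : s ∈ S) : wsetDist G w S s = 0 := by
  have h1 := wsetDist_le hpos hs s
  rw [wdist_self hpos] at h1
  exact le_antisymm h1 (wsetDist_nonneg hpos S s)

lemma wsetDist_mono (hpos : ∀ x y, G.Adj x y → 0 < w x y) {S T : Finset V}
    (hS : S.Nonempty) (hST : S ⊆ T) (x : V) :
    wsetDist G w T x ≤ wsetDist G w S x := by
  apply csInf_le_csInf (wsetDist_set_bdd hpos T x) (wsetDist_set_nonempty hS x)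
  rintro r ⟨s, hs, rfl⟩
  exact ⟨s, hST hs, rfl⟩

lemma wsetDist_triangle (hconn : G.Connected) (hpos : ∀ x y, G.Adj x y → 0 < w x y)
    {S : Finset V} (hS : S.Nonempty) (x y : V) :
    wsetDist G w S y ≤ wsetDist G w S x + wdist G w x y := by
  have h : ∀ r ∈ {r | ∃ s ∈ S, wdist G w s x = r},
      wsetDist G w S y - wdist G w x y ≤ r := by
    rintro r ⟨s, hs, rfl⟩
    have h1 := wdist_triangle hconn hpos s x y
    have h2 := wsetDist_le hpos hs y
    linarith
  have := le_csInf (wsetDist_set_nonempty hS x) h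
  rw [show sInf {r | ∃ s ∈ S, wdist G w s x = r} = wsetDist G w S x from rfl] at this
  linarith

lemma wreach_dist (hconn : G.Connected) (hpos : ∀ x y, G.Adj x y → 0 < w x y)
    {S : Finset V} {v x : V} (hx : x ∈ wreach G w S v) :
    wsetDist G w S v + wdist G w v x ≤ wsetDist G w S x := by
  induction hx with
  | refl => rw [wdist_self hpos]; linarith
  | @tail b c hvb hbc ih =>
      obtain ⟨hadj, heq⟩ := hbc
      have h1 : wdist G w v c ≤ wdist G w v b + w b c := by
        have := wdist_triangle hconn hpos v b c
        have := wdist_le_w hpos hadj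
        linarith
      rw [heq]; linarith

end Aux

theorem stmt0 {V : Type*} [Fintype V] [DecidableEq V] (G : SimpleGraph V)
    (hconn : G.Connected) (w : V → V → ℝ)
    (hpos : ∀ x y, G.Adj x y → 0 < w x y) (hsym : ∀ x y, w x y = w y x)
    (S : Finset V) (hS : S.Nonempty) (v : V) (hv : v ∉ S) :
    wFarness G w S - wFarness G w (insert v S) ≥
      ((wreach G w S v).ncard : ℝ) * wsetDist G w S v := by
  classical
  set dS := wsetDist G w S with hdS
  set dI := wsetDist G w (insert v S) with hdI
  have hSI : S ⊆ insert v S := Finset.subset_insert v S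
  have hterm : ∀ x, dI x ≤ dS x := fun x => wsetDist_mono hpos hS hSI x
  -- rewrite the farness difference
  have hcompl : (insert v S)ᶜ = Sᶜ.erase v := by
    ext x; simp [Finset.mem_erase, and_comm]
  have hvSc : v ∈ Sᶜ := Finset.mem_compl.mpr hv
  have hsplit : wFarness G w S = dS v + ∑ x ∈ Sᶜ.erase v, dS x := by
    rw [wFarness, ← Finset.add_sum_erase _ _ hvSc]
  have hins : wFarness G w (insert v S) = ∑ x ∈ Sᶜ.erase v, dI x := by
    rw [wFarness, hcompl]
  have hdiff : wFarness G w S - wFarness G w (insert v S)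
      = dS v + ∑ x ∈ Sᶜ.erase v, (dS x - dI x) := by
    rw [hsplit, hins, Finset.sum_sub_distrib]; ring
  have hdSv_nonneg : 0 ≤ dS v := wsetDist_nonneg hpos S v
  rcases eq_or_lt_of_le hdSv_nonneg with hzero | hposv
  · -- distance zero case
    rw [hdiff, ← hzero, mul_zero]
    have : 0 ≤ ∑ x ∈ Sᶜ.erase v, (dS x - dI x) :=
      Finset.sum_nonneg fun x _ => by have := hterm x; linarith
    linarith
  · -- main case
    have hDfin : (wreach G w S v).Finite := Set.toFinite _
    set D : Finset V := hDfin.toFinset with hD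
    have hmemD : ∀ x, x ∈ D ↔ x ∈ wreach G w S v := fun x => hDfin.mem_toFinset
    have hncard : (wreach G w S v).ncard = D.card := Set.ncard_eq_toFinset_card _ hDfin
    have hvD : v ∈ D := (hmemD v).mpr Relation.ReflTransGen.refl
    have hkey : ∀ x ∈ D, dS v + wdist G w v x ≤ dS x := by
      intro x hx
      exact wreach_dist hconn hpos ((hmemD x).mp hx)
    have hDc : D ⊆ Sᶜ := by
      intro x hx
      rw [Finset.mem_compl]
      intro hxS
      have h1 := hkey x hx
      have h2 := wsetDist_mem_zero (G := G) (w := w) hpos hxS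
      have h3 := wdist_nonneg (G := G) (w := w) hpos v x
      rw [hdS] at h1; rw [h2] at h1
      linarith
    have hterm2 : ∀ x ∈ D.erase v, dS v ≤ dS x - dI x := by
      intro x hx
      have hxD := Finset.mem_of_mem_erase hx
      have h1 := hkey x hxD
      have h2 : dI x ≤ wdist G w v x :=
        wsetDist_le hpos (Finset.mem_insert_self v S) x
      linarith
    have hsum2 : ((D.erase v).card : ℝ) * dS v ≤ ∑ x ∈ D.erase v, (dS x - dI x) := by
      calc ((D.erase v).card : ℝ) * dS v = ∑ _x ∈ D.erase v, dS v := by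
            rw [Finset.sum_const, nsmul_eq_mul]
        _ ≤ ∑ x ∈ D.erase v, (dS x - dI x) := Finset.sum_le_sum hterm2
    have hsum3 : ∑ x ∈ D.erase v, (dS x - dI x) ≤ ∑ x ∈ Sᶜ.erase v, (dS x - dI x) := by
      apply Finset.sum_le_sum_of_subset_of_nonneg
      · exact Finset.erase_subset_erase v hDc
      · intro x _ _; have := hterm x; linarith
    have hcard : ((D.erase v).card : ℝ) = (D.card : ℝ) - 1 := by
      rw [Finset.card_erase_of_mem hvD]
      have : 1 ≤ D.card := Finset.card_pos.mpr ⟨v, hvD⟩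
      push_cast [Nat.cast_sub this]
      ring
    rw [hdiff, hncard]
    rw [hcard] at hsum2
    nlinarith [hsum2, hsum3]
end

section
/- Let G = (V,E) be an undirected connected unweighted graph, S ⊆ V nonempty, and let v ∈ V \ S be a neighbor of S (i.e., dist(S,v) = 1). Let D_v be the set of vertices reachable from v in the BFS DAG B_S rooted at S. Then f(S) − f(S ∪ {v}) = |D_v| · dist(S,v) = |D_v|. -/
open SimpleGraph Finset

/-- Distance from a group `S` to a vertex `x` in an unweighted graph. -/
noncomputable def setDist {V : Type*} (G : SimpleGraph V) (S : Finset V) (x : V) : ℕ :=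
  sInf {d | ∃ s ∈ S, G.dist s x = d}

/-- Farness of a group `S`. -/
noncomputable def farness {V : Type*} [Fintype V] [DecidableEq V]
    (G : SimpleGraph V) (S : Finset V) : ℕ :=
  ∑ x ∈ Sᶜ, setDist G S x

/-- Edge relation of the BFS DAG rooted at `S`. -/
def bfsEdge {V : Type*} (G : SimpleGraph V) (S : Finset V) (x y : V) : Prop :=
  G.Adj x y ∧ setDist G S y = setDist G S x + 1

/-- Vertices reachable from `v` in the BFS DAG rooted at `S` (including `v`). -/
def reach {V : Type*} (G : SimpleGraph V) (S : Finset V) (v : V) : Set V :=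
  {x | Relation.ReflTransGen (bfsEdge G S) v x}

section Aux

variable {V : Type*} {G : SimpleGraph V} {S : Finset V}

lemma exists_setDist (hS : S.Nonempty) (x : V) :
    ∃ s ∈ S, G.dist s x = setDist G S x := by
  obtain ⟨s, hs⟩ := hS
  exact Nat.sInf_mem (⟨G.dist s x, s, hs, rfl⟩ : {d | ∃ s ∈ S, G.dist s x = d}.Nonempty)

lemma setDist_le {s : V} (hs : s ∈ S) (x : V) :
    setDist G S x ≤ G.dist s x := Nat.sInf_le ⟨s, hs, rfl⟩

lemma setDist_triangle (hconn : G.Connected) (hS : S.Nonempty) (x y : V) :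
    setDist G S y ≤ setDist G S x + G.dist x y := by
  obtain ⟨s, hs, hsx⟩ := exists_setDist (G := G) hS x
  calc setDist G S y ≤ G.dist s y := setDist_le hs y
    _ ≤ G.dist s x + G.dist x y := hconn.dist_triangle
    _ = _ := by rw [hsx]

lemma setDist_pos (hconn : G.Connected) (hS : S.Nonempty) {x : V} (hx : x ∉ S) :
    0 < setDist G S x := by
  rcases Nat.eq_zero_or_pos (setDist G S x) with h | h
  · obtain ⟨s, hs, hsx⟩ := exists_setDist (G := G) hS x
    rw [h] at hsx
    exact absurd (hconn.dist_eq_zero_iff.mp hsx ▸ hs) hx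
  · exact h

lemma setDist_insert [DecidableEq V] (hS : S.Nonempty) (v x : V) :
    setDist G (insert v S) x = min (G.dist v x) (setDist G S x) := by
  classical
  apply le_antisymm
  · apply le_min
    · exact setDist_le (Finset.mem_insert_self v S) x
    · obtain ⟨s, hs, hsx⟩ := exists_setDist (G := G) hS x
      exact hsx ▸ setDist_le (Finset.mem_insert_of_mem hs) x
  · obtain ⟨s, hs, hsx⟩ := exists_setDist (G := G) ⟨v, Finset.mem_insert_self v S⟩ x
    rw [← hsx]
    rcases Finset.mem_insert.mp hs with rfl | hs
    · exact min_le_left _ _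
    · exact le_trans (min_le_right _ _) (setDist_le hs x)

variable (hconn : G.Connected) (hS : S.Nonempty) {v : V} (hdist : setDist G S v = 1)

include hconn hS hdist

/-- Any element of `reach G S v` has `setDist = dist v · + 1`. -/
lemma setDist_of_mem_reach : ∀ {x : V}, x ∈ reach G S v →
    setDist G S x = G.dist v x + 1 := by
  intro x hx
  induction hx with
  | refl => simpa [SimpleGraph.dist_self] using hdist
  | tail _ he ih =>
    rename_i b c _
    have h1 : G.dist v c ≤ G.dist v b + 1 := by
      have := SimpleGraph.dist_le (he.1.toWalk.copy rfl rfl)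
      calc G.dist v c ≤ G.dist v b + G.dist b c := hconn.dist_triangle
        _ ≤ G.dist v b + 1 := by
            have : G.dist b c ≤ 1 := by
              simpa using SimpleGraph.dist_le he.1.toWalk
            omega
    have h2 : setDist G S c ≤ 1 + G.dist v c := by
      have := setDist_triangle hconn hS v c
      omega
    have h3 : setDist G S c = setDist G S b + 1 := he.2
    omega

lemma mem_reach_of_walk : ∀ {a b : V} (p : G.Walk a b), a ∈ reach G S v →
    setDist G S b = setDist G S a + p.length → b ∈ reach G S v := by
  intro a b p
  induction p with
  | nil => intro h _; exact h
  | cons hadj q ih =>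
    rename_i a c b
    intro ha hlen
    rw [SimpleGraph.Walk.length_cons] at hlen
    have hc_le : setDist G S c ≤ setDist G S a + 1 := by
      have := setDist_triangle hconn hS a c
      have : G.dist a c ≤ 1 := by simpa using SimpleGraph.dist_le hadj.toWalk
      omega
    have hb_le : setDist G S b ≤ setDist G S c + q.length := by
      have h1 := setDist_triangle hconn hS c b
      have h2 := SimpleGraph.dist_le q
      omega
    have hc : setDist G S c = setDist G S a + 1 := by omega
    exact ih (ha.tail ⟨hadj, hc⟩) (by omega)

lemma dist_ge_of_notMem_reach {x : V} (hx : x ∉ reach G S v) (hxS : x ∉ S) :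
    setDist G S x ≤ G.dist v x := by
  by_contra h
  push_neg at h
  have h1 : setDist G S x ≤ 1 + G.dist v x := by
    have := setDist_triangle hconn hS v x
    omega
  have h2 : setDist G S x = G.dist v x + 1 := by omega
  obtain ⟨p, hp⟩ := hconn.exists_walk_length_eq_dist v x
  exact hx (mem_reach_of_walk hconn hS hdist p Relation.ReflTransGen.refl (by omega))

end Aux

theorem stmt1 {V : Type*} [Fintype V] [DecidableEq V] (G : SimpleGraph V)
    (hconn : G.Connected) (S : Finset V) (hS : S.Nonempty)
    (v : V) (hv : v ∉ S) (hdist : setDist G S v = 1) :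
    (farness G S : ℤ) - farness G (insert v S) =
        ((reach G S v).ncard : ℤ) * setDist G S v ∧
      (farness G S : ℤ) - farness G (insert v S) = (reach G S v).ncard := by
  classical
  set T : Finset V := (insert v S)ᶜ with hT
  have hvT : v ∉ T := by simp [hT]
  have hcompl : Sᶜ = insert v T := by
    rw [hT, Finset.compl_insert, Finset.insert_erase (Finset.mem_compl.mpr hv)]
  -- value of setDist on T
  have key : ∀ x ∈ T, (setDist G (insert v S) x : ℤ) =
      setDist G S x - (if x ∈ reach G S v then 1 else 0) := by
    intro x hxT
    have hxvS : x ∉ insert v S := by simpa [hT] using hxT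
    have hxS : x ∉ S := fun h => hxvS (Finset.mem_insert_of_mem h)
    rw [setDist_insert hS]
    by_cases hx : x ∈ reach G S v
    · have h := setDist_of_mem_reach hconn hS hdist hx
      simp only [hx, if_pos]
      rw [min_eq_left (by omega)]
      omega
    · have h := dist_ge_of_notMem_reach hconn hS hdist hx hxS
      simp only [hx, if_neg, not_false_iff]
      rw [min_eq_right h]
      omega
  -- reach as a finset
  have hreach : reach G S v = insert v (↑(T.filter (· ∈ reach G S v)) : Set V) := by
    ext x
    simp only [Set.mem_insert_iff, Finset.coe_filter, Set.mem_setOf_eq, Finset.mem_coe]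
    constructor
    · intro hx
      by_cases hxv : x = v
      · exact Or.inl hxv
      · refine Or.inr ⟨?_, hx⟩
        have h := setDist_of_mem_reach hconn hS hdist hx
        have hxS : x ∉ S := by
          intro hxS
          have h2 : setDist G S x ≤ G.dist x x := setDist_le hxS x
          simp [SimpleGraph.dist_self] at h2
          omega
        simp [hT, hxv, hxS]
    · rintro (rfl | ⟨_, hx⟩)
      · exact Relation.ReflTransGen.refl
      · exact hx
  have hncard : (reach G S v).ncard = 1 + (T.filter (· ∈ reach G S v)).card := by
    nth_rewrite 1 [hreach]
    rw [Set.ncard_insert_of_notMem (by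
      simp only [Finset.coe_filter, Set.mem_setOf_eq, Finset.mem_coe]
      exact fun h => hvT h.1), Set.ncard_coe_finset]
    omega
  -- main computation
  have hfar1 : (farness G S : ℤ) = setDist G S v + ∑ x ∈ T, (setDist G S x : ℤ) := by
    rw [farness, hcompl, Finset.sum_insert hvT]
    push_cast
    ring
  have hfar2 : (farness G (insert v S) : ℤ) = ∑ x ∈ T, (setDist G (insert v S) x : ℤ) := by
    rw [farness, hT]
    push_cast
    ring
  have hsum : ∑ x ∈ T, (setDist G (insert v S) x : ℤ) =
      ∑ x ∈ T, ((setDist G S x : ℤ) - (if x ∈ reach G S v then 1 else 0)) :=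
    Finset.sum_congr rfl key
  have hcount : ∑ x ∈ T, (if x ∈ reach G S v then (1 : ℤ) else 0) =
      (T.filter (· ∈ reach G S v)).card := by
    simp [Finset.sum_boole]
  have : (farness G S : ℤ) - farness G (insert v S) = (reach G S v).ncard := by
    rw [hfar1, hfar2, hsum, Finset.sum_sub_distrib, hcount, hncard, hdist]
    push_cast
    ring
  exact ⟨by rw [this, hdist]; push_cast; ring, this⟩
end

section
/- Group closeness C(S) = |V| / f(S) (with f the farness) is not submodular in general: there exists a finite undirected connected unweighted graph G = (V,E), nonempty sets S ⊆ T ⊆ V, and a vertex v ∈ V\T such that C(S∪{v}) − C(S) < C(T∪{v}) − C(T). -/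
open SimpleGraph Finset

/-- The star `K_{1,3}` on `Fin 4` with center `0`. -/
def starG : SimpleGraph (Fin 4) where
  Adj x y := x ≠ y ∧ (x = 0 ∨ y = 0)
  symm := ⟨by intro x y ⟨h1, h2⟩; exact ⟨h1.symm, h2.symm⟩⟩
  loopless := ⟨by intro x ⟨h1, _⟩; exact h1 rfl⟩

instance : DecidableRel starG.Adj := fun _ _ => instDecidableAnd

lemma starG_conn : starG.Connected := by
  have hreach : ∀ x : Fin 4, starG.Reachable x 0 := by
    intro x
    by_cases h : x = 0
    · subst h; exact Reachable.refl _
    · exact (show starG.Adj x 0 from ⟨h, Or.inr rfl⟩).reachable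
  exact { preconnected := fun u v => (hreach u).trans (hreach v).symm, nonempty := ⟨0⟩ }

lemma dist_center (i : Fin 4) (h : i ≠ 0) : starG.dist 0 i = 1 :=
  SimpleGraph.dist_eq_one_iff_adj.mpr ⟨fun e => h e.symm, Or.inl rfl⟩

lemma dist_center' (i : Fin 4) (h : i ≠ 0) : starG.dist i 0 = 1 :=
  SimpleGraph.dist_eq_one_iff_adj.mpr ⟨h, Or.inr rfl⟩

lemma dist_leaves (i j : Fin 4) (hi : i ≠ 0) (hj : j ≠ 0) (hij : i ≠ j) :
    starG.dist i j = 2 := by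
  have hle : starG.dist i j ≤ 2 := by
    calc starG.dist i j ≤ starG.dist i 0 + starG.dist 0 j := starG_conn.dist_triangle
    _ = 2 := by rw [dist_center' i hi, dist_center j hj]
  have hpos : 0 < starG.dist i j := starG_conn.pos_dist_of_ne hij
  have hne1 : starG.dist i j ≠ 1 := by
    intro h
    rcases SimpleGraph.dist_eq_one_iff_adj.mp h with ⟨_, h2 | h2⟩
    · exact hi h2
    · exact hj h2
  omega

lemma setDist_eq {V : Type*} (G : SimpleGraph V) (S : Finset V) (x : V) (k : ℕ)
    (h1 : ∃ s ∈ S, G.dist s x = k) (h2 : ∀ s ∈ S, k ≤ G.dist s x) :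
    setDist G S x = k := by
  apply le_antisymm
  · exact Nat.sInf_le h1
  · apply le_csInf ⟨k, h1⟩
    rintro b ⟨s, hs, rfl⟩
    exact h2 s hs

theorem stmt11 :
    ∃ (n : ℕ) (G : SimpleGraph (Fin n)) (_ : DecidableRel G.Adj)
      (S T : Finset (Fin n)) (v : Fin n),
      G.Connected ∧ S.Nonempty ∧ S ⊆ T ∧ v ∉ T ∧ insert v T ≠ Finset.univ ∧
        (n : ℝ) / (farness G (insert v S)) - (n : ℝ) / (farness G S) <
          (n : ℝ) / (farness G (insert v T)) - (n : ℝ) / (farness G T) := by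
  refine ⟨4, starG, inferInstance, {1}, {1, 2}, 0, starG_conn, ⟨1, by decide⟩,
    by decide, by decide, by decide, ?_⟩
  have d10 : starG.dist (1 : Fin 4) 0 = 1 := dist_center' 1 (by decide)
  have d01 := fun i h => dist_center i h
  have fS : farness starG {1} = 5 := by
    have hc : ({1} : Finset (Fin 4))ᶜ = {0, 2, 3} := by decide
    rw [farness, hc]
    have h0 : setDist starG {1} 0 = 1 :=
      setDist_eq _ _ _ _ ⟨1, by simp, d10⟩ (by intro s hs; simp at hs; subst hs; omega)
    have h2 : setDist starG {1} 2 = 2 :=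
      setDist_eq _ _ _ _ ⟨1, by simp, dist_leaves 1 2 (by decide) (by decide) (by decide)⟩
        (by intro s hs; simp at hs; subst hs;
            rw [dist_leaves 1 2 (by decide) (by decide) (by decide)])
    have h3 : setDist starG {1} 3 = 2 :=
      setDist_eq _ _ _ _ ⟨1, by simp, dist_leaves 1 3 (by decide) (by decide) (by decide)⟩
        (by intro s hs; simp at hs; subst hs;
            rw [dist_leaves 1 3 (by decide) (by decide) (by decide)])
    rw [show ({0, 2, 3} : Finset (Fin 4)) = insert 0 (insert 2 {3}) from rfl]
    rw [Finset.sum_insert (by decide), Finset.sum_insert (by decide), Finset.sum_singleton,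
      h0, h2, h3]
    rfl
  have fSv : farness starG (insert 0 {1}) = 2 := by
    have hc : (insert (0 : Fin 4) ({1} : Finset (Fin 4)))ᶜ = ({2, 3} : Finset (Fin 4)) := by decide
    rw [farness, hc]
    have h2 : setDist starG (insert 0 {1}) 2 = 1 := by
      apply setDist_eq _ _ _ _ ⟨0, by simp, dist_center 2 (by decide)⟩
      intro s hs
      simp [Finset.mem_insert] at hs
      rcases hs with rfl | rfl
      · rw [dist_center 2 (by decide)]
      · rw [dist_leaves 1 2 (by decide) (by decide) (by decide)]; omega
    have h3 : setDist starG (insert 0 {1}) 3 = 1 := by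
      apply setDist_eq _ _ _ _ ⟨0, by simp, dist_center 3 (by decide)⟩
      intro s hs
      simp [Finset.mem_insert] at hs
      rcases hs with rfl | rfl
      · rw [dist_center 3 (by decide)]
      · rw [dist_leaves 1 3 (by decide) (by decide) (by decide)]; omega
    rw [show ({2, 3} : Finset (Fin 4)) = insert 2 {3} from rfl]
    rw [Finset.sum_insert (by decide), Finset.sum_singleton, h2, h3]
  have fT : farness starG {1, 2} = 3 := by
    have hc : ({1, 2} : Finset (Fin 4))ᶜ = {0, 3} := by decide
    rw [farness, hc]
    have h0 : setDist starG ({1, 2} : Finset (Fin 4)) 0 = 1 := by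
      apply setDist_eq _ _ _ _ ⟨1, by simp, d10⟩
      intro s hs
      simp at hs
      rcases hs with rfl | rfl
      · rw [d10]
      · rw [dist_center' 2 (by decide)]
    have h3 : setDist starG ({1, 2} : Finset (Fin 4)) 3 = 2 := by
      apply setDist_eq _ _ _ _
        ⟨1, by simp, dist_leaves 1 3 (by decide) (by decide) (by decide)⟩
      intro s hs
      simp at hs
      rcases hs with rfl | rfl
      · rw [dist_leaves 1 3 (by decide) (by decide) (by decide)]
      · rw [dist_leaves 2 3 (by decide) (by decide) (by decide)]
    rw [show ({0, 3} : Finset (Fin 4)) = insert 0 {3} from rfl]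
    rw [Finset.sum_insert (by decide), Finset.sum_singleton, h0, h3]
  have fTv : farness starG (insert 0 {1, 2}) = 1 := by
    have hc : (insert (0 : Fin 4) ({1, 2} : Finset (Fin 4)))ᶜ = ({3} : Finset (Fin 4)) := by decide
    rw [farness, hc]
    have h3 : setDist starG (insert 0 {1, 2}) 3 = 1 := by
      apply setDist_eq _ _ _ _ ⟨0, by simp, dist_center 3 (by decide)⟩
      intro s hs
      simp [Finset.mem_insert] at hs
      rcases hs with rfl | rfl | rfl
      · rw [dist_center 3 (by decide)]
      · rw [dist_leaves 1 3 (by decide) (by decide) (by decide)]; omega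
      · rw [dist_leaves 2 3 (by decide) (by decide) (by decide)]; omega
    rw [Finset.sum_singleton, h3]
  rw [fS, fSv, fT, fTv]
  norm_num
end
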